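/- Let (H, ⇀, ↼) be a matched pair of actions on a Hopf algebra H satisfying the involutivity condition x ↼ y = S(x₁ ⇀ y) ⇀ x₂ for all x, y. Then the left adjoint action of the transmuted Hopf algebra H_⇀ is trivial: ad_{L,x}(y) = x₁(S(x₄) ⇀ y₁)(S(S(x₃) ⇀ y₂) ⇀ S(x₂)) = ε(x)y for all x, y ∈ H. -/

import Mathlib

open TensorProduct Coalgebra HopfAlgebra LinearMap


noncomputable section

universe w

variable (k H : Type*) [CommRing k] [Ring H] [HopfAlgebra k H]

/-- `f` is a left `H`-module coalgebra action of the Hopf algebra `H` on itself. -/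
structure IsLeftModCoalgAction (f : H ⊗[k] H →ₗ[k] H) : Prop where
  one_act : ∀ a : H, f (1 ⊗ₜ a) = a
  mul_act : ∀ x y a : H, f ((x * y) ⊗ₜ a) = f (x ⊗ₜ f (y ⊗ₜ a))
  counit_act : ∀ x a : H, counit (R := k) (f (x ⊗ₜ a)) = counit (R := k) x * counit (R := k) a
  comul_act : ∀ (x a : H) {ι κ : Type w} (rx : Coalgebra.Repr k x ι) (ra : Coalgebra.Repr k a κ),
      comul (R := k) (f (x ⊗ₜ a)) =
        ∑ i ∈ rx.index, ∑ j ∈ ra.index,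
          f (rx.left i ⊗ₜ ra.left j) ⊗ₜ[k] f (rx.right i ⊗ₜ ra.right j)

/-- `g` is a right `H`-module coalgebra action of the Hopf algebra `H` on itself. -/
structure IsRightModCoalgAction (g : H ⊗[k] H →ₗ[k] H) : Prop where
  act_one : ∀ x : H, g (x ⊗ₜ 1) = x
  act_mul : ∀ x a b : H, g (x ⊗ₜ (a * b)) = g (g (x ⊗ₜ a) ⊗ₜ b)
  counit_act : ∀ x a : H, counit (R := k) (g (x ⊗ₜ a)) = counit (R := k) x * counit (R := k) a
  comul_act : ∀ (x a : H) {ι κ : Type w} (rx : Coalgebra.Repr k x ι) (ra : Coalgebra.Repr k a κ),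
      comul (R := k) (g (x ⊗ₜ a)) =
        ∑ i ∈ rx.index, ∑ j ∈ ra.index,
          g (rx.left i ⊗ₜ ra.left j) ⊗ₜ[k] g (rx.right i ⊗ₜ ra.right j)

/-- `(H, f, g)` (written `(H, ⇀, ↼)`) is a matched pair of actions on the Hopf algebra `H`:
`f` is a left module coalgebra action, `g` a right module coalgebra action, satisfying the
matched pair conditions (MP1)–(MP5) and the extra condition `xy = (x₁ ⇀ y₁)(x₂ ↼ y₂)`. -/
structure IsMatchedPairOfActions (f g : H ⊗[k] H →ₗ[k] H) : Prop where
  left_action : IsLeftModCoalgAction.{w} k H f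
  right_action : IsRightModCoalgAction.{w} k H g
  mp1 : ∀ (x a b : H) {ι κ : Type w} (rx : Coalgebra.Repr k x ι) (ra : Coalgebra.Repr k a κ),
      f (x ⊗ₜ (a * b)) =
        ∑ i ∈ rx.index, ∑ j ∈ ra.index,
          f (rx.left i ⊗ₜ ra.left j) * f (g (rx.right i ⊗ₜ ra.right j) ⊗ₜ b)
  mp2 : ∀ x : H, f (x ⊗ₜ 1) = counit (R := k) x • (1 : H)
  mp3 : ∀ (x y a : H) {ι κ : Type w} (ry : Coalgebra.Repr k y ι) (ra : Coalgebra.Repr k a κ),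
      g ((x * y) ⊗ₜ a) =
        ∑ i ∈ ry.index, ∑ j ∈ ra.index,
          g (x ⊗ₜ f (ry.left i ⊗ₜ ra.left j)) * g (ry.right i ⊗ₜ ra.right j)
  mp4 : ∀ a : H, g ((1 : H) ⊗ₜ a) = counit (R := k) a • (1 : H)
  mp5 : ∀ (x a : H) {ι κ : Type w} (rx : Coalgebra.Repr k x ι) (ra : Coalgebra.Repr k a κ),
      (∑ i ∈ rx.index, ∑ j ∈ ra.index,
        f (rx.left i ⊗ₜ ra.left j) ⊗ₜ[k] g (rx.right i ⊗ₜ ra.right j)) =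
      ∑ i ∈ rx.index, ∑ j ∈ ra.index,
        f (rx.right i ⊗ₜ ra.right j) ⊗ₜ[k] g (rx.left i ⊗ₜ ra.left j)
  mp_mul : ∀ (x y : H) {ι κ : Type w} (rx : Coalgebra.Repr k x ι) (ry : Coalgebra.Repr k y κ),
      x * y = ∑ i ∈ rx.index, ∑ j ∈ ry.index,
        f (rx.left i ⊗ₜ ry.left j) * g (rx.right i ⊗ₜ ry.right j)

/-- The braiding operator `r(x ⊗ y) = (x₁ ⇀ y₁) ⊗ (x₂ ↼ y₂)` associated to the pair `(f, g)`. -/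
def braidOp (f g : H ⊗[k] H →ₗ[k] H) : H ⊗[k] H →ₗ[k] H ⊗[k] H :=
  TensorProduct.map f g ∘ₗ (tensorTensorTensorComm k H H H H).toLinearMap
    ∘ₗ TensorProduct.map (comul (R := k)) (comul (R := k))


/- ===== Auxiliary material ===== -/
section MPAuxOuter
open TensorProduct Coalgebra HopfAlgebra LinearMap Finset

noncomputable section
variable {k H : Type*} [CommRing k] [Ring H] [HopfAlgebra k H]

local notation "𝒮" => antipode (R := k) (A := H)

lemma repr_sum_apply {V : Type*} [AddCommMonoid V] [Module k V] {a : H} {ι : Type*}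
    (r : Coalgebra.Repr k a ι) (T : H ⊗[k] H →ₗ[k] V) :
    ∑ i ∈ r.index, T (r.left i ⊗ₜ r.right i) = T (comul a) := by
  rw [← map_sum, r.eq]

lemma sum_counit_smul {a : H} {ι : Type*} (r : Coalgebra.Repr k a ι) :
    ∑ i ∈ r.index, counit (R := k) (r.left i) • r.right i = a := by
  have h := congrArg ((TensorProduct.lid k H).toLinearMap ∘ₗ
      LinearMap.rTensor H (counit (R := k))) r.eq
  simpa [map_sum] using h

lemma sum_smul_counit {a : H} {ι : Type*} (r : Coalgebra.Repr k a ι) :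
    ∑ i ∈ r.index, counit (R := k) (r.right i) • r.left i = a := by
  have h := congrArg ((TensorProduct.rid k H).toLinearMap ∘ₗ
      LinearMap.lTensor H (counit (R := k))) r.eq
  simpa [map_sum] using h

/-- trilinear map constructor -/
def tri {V : Type*} [AddCommMonoid V] [Module k V] (φ : H →ₗ[k] H →ₗ[k] H →ₗ[k] V) :
    H ⊗[k] (H ⊗[k] H) →ₗ[k] V :=
  TensorProduct.lift ((TensorProduct.uncurry (RingHom.id k) H H V) ∘ₗ φ)

@[simp] lemma tri_apply {V : Type*} [AddCommMonoid V] [Module k V]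
    (φ : H →ₗ[k] H →ₗ[k] H →ₗ[k] V) (a b c : H) :
    tri φ (a ⊗ₜ (b ⊗ₜ c)) = φ a b c := by
  simp [tri]

lemma coassoc_repr {V : Type*} [AddCommMonoid V] [Module k V]
    (T : H ⊗[k] (H ⊗[k] H) →ₗ[k] V) (w : H)
    {ι κ : Type*} (r : Coalgebra.Repr k w ι) {ι₂ : ι → Type*}
    (r2 : ∀ i, Coalgebra.Repr k (r.right i) (ι₂ i))
    (s : Coalgebra.Repr k w κ) {κ₂ : κ → Type*} (s2 : ∀ p, Coalgebra.Repr k (s.left p) (κ₂ p)) :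
    ∑ i ∈ r.index, ∑ j ∈ (r2 i).index,
        T (r.left i ⊗ₜ ((r2 i).left j ⊗ₜ (r2 i).right j)) =
    ∑ p ∈ s.index, ∑ q ∈ (s2 p).index,
        T ((s2 p).left q ⊗ₜ ((s2 p).right q ⊗ₜ s.right p)) := by
  have hL : ∑ i ∈ r.index, ∑ j ∈ (r2 i).index,
      T (r.left i ⊗ₜ ((r2 i).left j ⊗ₜ (r2 i).right j)) =
      T ((comul (R := k)).lTensor H (comul w)) := by
    rw [← r.eq, map_sum, map_sum]
    refine Finset.sum_congr rfl fun i _ => ?_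
    rw [lTensor_tmul, ← (r2 i).eq, tmul_sum, map_sum]
  have hR : ∑ p ∈ s.index, ∑ q ∈ (s2 p).index,
      T ((s2 p).left q ⊗ₜ ((s2 p).right q ⊗ₜ s.right p)) =
      T ((TensorProduct.assoc k H H H) ((comul (R := k)).rTensor H (comul w))) := by
    rw [← s.eq, map_sum, map_sum, map_sum]
    refine Finset.sum_congr rfl fun p _ => ?_
    rw [rTensor_tmul, ← (s2 p).eq, sum_tmul, map_sum, map_sum]
    refine Finset.sum_congr rfl fun q _ => ?_
    rw [_root_.TensorProduct.assoc_tmul]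
  rw [hL, hR, coassoc_apply]

noncomputable section
variable {k H : Type*} [CommRing k] [Ring H] [HopfAlgebra k H]

/-- `x ↦ ∑ S x₂ ⊗ S x₁` as a linear map. -/
def GLmap (k H : Type*) [CommRing k] [Ring H] [HopfAlgebra k H] : H →ₗ[k] H ⊗[k] H :=
  TensorProduct.map (antipode (R := k)) (antipode (R := k)) ∘ₗ
    (TensorProduct.comm k H H).toLinearMap ∘ₗ comul

lemma GLmap_repr {v : H} {ι : Type*} (r : Coalgebra.Repr k v ι) :
    GLmap k H v = ∑ i ∈ r.index,
      antipode (R := k) (r.right i) ⊗ₜ[k] antipode (R := k) (r.left i) := by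
  simp only [GLmap, LinearMap.comp_apply, ← r.eq, map_sum, LinearEquiv.coe_coe,
    comm_tmul, _root_.TensorProduct.map_tmul]

lemma conv1 {b : H} {ι : Type*} (r : Coalgebra.Repr k b ι) :
    ∑ i ∈ r.index, comul (R := k) (antipode (R := k) (r.left i)) * comul (r.right i)
      = counit (R := k) b • (1 : H ⊗[k] H) := by
  calc ∑ i ∈ r.index, comul (R := k) (antipode (R := k) (r.left i)) * comul (r.right i)
      = ∑ i ∈ r.index, comul (R := k) (antipode (R := k) (r.left i) * r.right i) := by
        simp
    _ = comul (R := k) (∑ i ∈ r.index, antipode (R := k) (r.left i) * r.right i) :=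
        (map_sum _ _ _).symm
    _ = counit (R := k) b • (1 : H ⊗[k] H) := by
        rw [sum_antipode_mul_eq_smul r, map_smul, Bialgebra.comul_one]

noncomputable section
variable {k H : Type*} [CommRing k] [Ring H] [HopfAlgebra k H]


/-- trilinear `u v w ↦ (u ⊗ v) * GL w` -/
def glTri (k H : Type*) [CommRing k] [Ring H] [HopfAlgebra k H] :
    H →ₗ[k] H →ₗ[k] H →ₗ[k] H ⊗[k] H :=
  LinearMap.mk₂ k (fun u v => LinearMap.mulLeft k (u ⊗ₜ[k] v) ∘ₗ GLmap k H)
    (fun u u' v => by ext w; simp [add_tmul, add_mul])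
    (fun s u v => by ext w; show ((s • u) ⊗ₜ[k] v) * GLmap k H w = _; rw [← TensorProduct.smul_tmul']; simp [smul_mul_assoc])
    (fun u v v' => by ext w; simp [tmul_add, add_mul])
    (fun s u v => by ext w; simp [tmul_smul, smul_mul_assoc])

@[simp] lemma glTri_apply (u v w : H) :
    glTri k H u v w = (u ⊗ₜ[k] v) * GLmap k H w := rfl

/-- trilinear `u v w ↦ (z * S w) ⊗ (u * S v)` -/
def prodTri (z : H) : H →ₗ[k] H →ₗ[k] H →ₗ[k] H ⊗[k] H :=
  LinearMap.mk₂ k (fun u v =>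
      ((TensorProduct.mk k H H).flip (u * antipode (R := k) v)) ∘ₗ
        LinearMap.mulLeft k z ∘ₗ antipode (R := k))
    (fun u u' v => by ext w; simp [add_mul, tmul_add])
    (fun s u v => by ext w; simp [smul_mul_assoc, tmul_smul])
    (fun u v v' => by ext w; simp [mul_add, tmul_add])
    (fun s u v => by ext w; simp [mul_smul_comm, tmul_smul])

@[simp] lemma prodTri_apply (z u v w : H) :
    prodTri z u v w = (z * antipode (R := k) w) ⊗ₜ[k] (u * antipode (R := k) v) := rfl

/-- trilinear `u v w ↦ Δ(S u) * (Δ v * GL w)` -/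
def convTri (k H : Type*) [CommRing k] [Ring H] [HopfAlgebra k H] :
    H →ₗ[k] H →ₗ[k] H →ₗ[k] H ⊗[k] H :=
  LinearMap.mk₂ k (fun u v =>
      LinearMap.mulLeft k (comul (R := k) (antipode (R := k) u)) ∘ₗ
        LinearMap.mulLeft k (comul (R := k) v) ∘ₗ GLmap k H)
    (fun u u' v => by ext w; simp [map_add, add_mul])
    (fun s u v => by ext w; simp [map_smul, smul_mul_assoc])
    (fun u v v' => by ext w; simp [map_add, add_mul, mul_add])
    (fun s u v => by ext w; simp [map_smul, smul_mul_assoc, mul_smul_comm])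

@[simp] lemma convTri_apply (u v w : H) :
    convTri k H u v w =
      comul (R := k) (antipode (R := k) u) * (comul (R := k) v * GLmap k H w) := rfl

noncomputable section
variable {k H : Type*} [CommRing k] [Ring H] [HopfAlgebra k H]

lemma conv2 {b : H} {ι : Type*} (r : Coalgebra.Repr k b ι) :
    ∑ i ∈ r.index, comul (R := k) (r.left i) * GLmap k H (r.right i)
      = counit (R := k) b • (1 : H ⊗[k] H) := by
  let rl : ∀ p, Coalgebra.Repr k (r.left p) (H × H) := fun p => ℛ k (r.left p)
  let rr : ∀ i, Coalgebra.Repr k (r.right i) (H × H) := fun i => ℛ k (r.right i)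
  let r3 : ∀ i j, Coalgebra.Repr k ((rr i).right j) (H × H) := fun i j => ℛ k _
  let s2 : ∀ i p, Coalgebra.Repr k ((rr i).left p) (H × H) := fun i p => ℛ k _
  calc ∑ i ∈ r.index, comul (R := k) (r.left i) * GLmap k H (r.right i)
      = ∑ p ∈ r.index, ∑ q ∈ (rl p).index,
          tri (glTri k H) ((rl p).left q ⊗ₜ ((rl p).right q ⊗ₜ r.right p)) := by
        refine Finset.sum_congr rfl fun p _ => ?_
        rw [← (rl p).eq, Finset.sum_mul]
        simp
    _ = ∑ i ∈ r.index, ∑ j ∈ (rr i).index,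
          tri (glTri k H) (r.left i ⊗ₜ ((rr i).left j ⊗ₜ (rr i).right j)) :=
        (coassoc_repr (tri (glTri k H)) b r rr r rl).symm
    _ = ∑ i ∈ r.index, (r.left i * antipode (R := k) (r.right i)) ⊗ₜ[k] 1 := by
        refine Finset.sum_congr rfl fun i _ => ?_
        calc ∑ j ∈ (rr i).index,
              tri (glTri k H) (r.left i ⊗ₜ ((rr i).left j ⊗ₜ (rr i).right j))
            = ∑ j ∈ (rr i).index, ∑ l ∈ (r3 i j).index,
                tri (prodTri (r.left i))
                  ((rr i).left j ⊗ₜ ((r3 i j).left l ⊗ₜ (r3 i j).right l)) := by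
              refine Finset.sum_congr rfl fun j _ => ?_
              rw [tri_apply, glTri_apply, GLmap_repr (r3 i j), Finset.mul_sum]
              simp [Algebra.TensorProduct.tmul_mul_tmul]
          _ = ∑ p ∈ (rr i).index, ∑ q ∈ (s2 i p).index,
                tri (prodTri (r.left i))
                  ((s2 i p).left q ⊗ₜ ((s2 i p).right q ⊗ₜ (rr i).right p)) :=
              coassoc_repr (tri (prodTri (r.left i))) (r.right i) (rr i) (r3 i) (rr i) (s2 i)
          _ = ∑ p ∈ (rr i).index,
                (r.left i * antipode (R := k) ((rr i).right p)) ⊗ₜ[k]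
                  (counit (R := k) ((rr i).left p) • (1 : H)) := by
              refine Finset.sum_congr rfl fun p _ => ?_
              simp only [tri_apply, prodTri_apply, ← tmul_sum]
              rw [sum_mul_antipode_eq_smul (s2 i p)]
          _ = (r.left i * antipode (R := k) (r.right i)) ⊗ₜ[k] 1 := by
              have key : ∀ p, ((r.left i * antipode (R := k) ((rr i).right p)) ⊗ₜ[k]
                  (counit (R := k) ((rr i).left p) • (1 : H))) =
                  (r.left i * antipode (R := k)
                    (counit (R := k) ((rr i).left p) • (rr i).right p)) ⊗ₜ[k] (1 : H) := by
                intro p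
                rw [map_smul, mul_smul_comm, tmul_smul, smul_tmul']
              simp only [key, ← sum_tmul, ← Finset.mul_sum, ← map_sum, _root_.sum_counit_smul (rr i)]
    _ = counit (R := k) b • (1 : H ⊗[k] H) := by
        rw [← sum_tmul, sum_mul_antipode_eq_smul r, ← smul_tmul',
          ← Algebra.TensorProduct.one_def]

lemma comul_antipode (a : H) :
    comul (R := k) (antipode (R := k) a) = GLmap k H a := by
  let r := ℛ k a
  let rr : ∀ i, Coalgebra.Repr k (r.right i) (H × H) := fun i => ℛ k (r.right i)
  let rl : ∀ p, Coalgebra.Repr k (r.left p) (H × H) := fun p => ℛ k (r.left p)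
  have hX : ∑ i ∈ r.index, ∑ j ∈ (rr i).index,
      tri (convTri k H) (r.left i ⊗ₜ ((rr i).left j ⊗ₜ (rr i).right j)) =
      comul (R := k) (antipode (R := k) a) := by
    calc ∑ i ∈ r.index, ∑ j ∈ (rr i).index,
        tri (convTri k H) (r.left i ⊗ₜ ((rr i).left j ⊗ₜ (rr i).right j))
        = ∑ i ∈ r.index,
            counit (R := k) (r.right i) • comul (R := k) (antipode (R := k) (r.left i)) := by
          refine Finset.sum_congr rfl fun i _ => ?_
          simp only [tri_apply, convTri_apply, ← Finset.mul_sum]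
          rw [conv2 (rr i), mul_smul_comm, mul_one]
      _ = comul (R := k) (antipode (R := k) a) := by
          simp only [← map_smul, ← map_sum, sum_smul_counit r]
  have hX' : ∑ i ∈ r.index, ∑ j ∈ (rr i).index,
      tri (convTri k H) (r.left i ⊗ₜ ((rr i).left j ⊗ₜ (rr i).right j)) =
      GLmap k H a := by
    rw [coassoc_repr (tri (convTri k H)) a r rr r rl]
    calc ∑ p ∈ r.index, ∑ q ∈ (rl p).index,
        tri (convTri k H) ((rl p).left q ⊗ₜ ((rl p).right q ⊗ₜ r.right p))
        = ∑ p ∈ r.index, counit (R := k) (r.left p) • GLmap k H (r.right p) := by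
          refine Finset.sum_congr rfl fun p _ => ?_
          simp only [tri_apply, convTri_apply, ← mul_assoc, ← Finset.sum_mul]
          rw [conv1 (rl p), smul_mul_assoc, one_mul]
      _ = GLmap k H a := by
          simp only [← map_smul, ← map_sum, _root_.sum_counit_smul r]
  rw [← hX, hX']

/-- The swapped-antipode representation of `comul (S a)`. -/
def swapRepr {a : H} {ι : Type*} (r : Coalgebra.Repr k a ι) :
    Coalgebra.Repr k (antipode (R := k) a) ι where
  index := r.index
  left := fun i => antipode (R := k) (r.right i)
  right := fun i => antipode (R := k) (r.left i)
  eq := by rw [comul_antipode]; exact (GLmap_repr r).symm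

noncomputable section
variable {k H : Type*} [CommRing k] [Ring H] [HopfAlgebra k H]

/-- trilinear `a b c ↦ x₁ * f (S c ⊗ y₁) * f (S (f (S b ⊗ y₂)) ⊗ S a)` -/
def mainTri (f : H ⊗[k] H →ₗ[k] H) (x₁ y₁ y₂ : H) : H →ₗ[k] H →ₗ[k] H →ₗ[k] H :=
  LinearMap.mk₂ k (fun a b =>
      LinearMap.mulRight k
          (f (antipode (R := k) (f (antipode (R := k) b ⊗ₜ y₂)) ⊗ₜ antipode (R := k) a)) ∘ₗ
        LinearMap.mulLeft k x₁ ∘ₗ (TensorProduct.curry f).flip y₁ ∘ₗ antipode (R := k))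
    (fun m m' n => by ext c; simp [map_add, tmul_add, mul_add])
    (fun s m n => by ext c; simp [map_smul, tmul_smul, mul_smul_comm])
    (fun m n n' => by ext c; simp [map_add, add_tmul, mul_add])
    (fun s m n => by ext c; simp [map_smul, smul_tmul, tmul_smul, mul_smul_comm])

@[simp] lemma mainTri_apply (f : H ⊗[k] H →ₗ[k] H) (x₁ y₁ y₂ a b c : H) :
    mainTri f x₁ y₁ y₂ a b c =
      x₁ * f (antipode (R := k) c ⊗ₜ y₁) *
        f (antipode (R := k) (f (antipode (R := k) b ⊗ₜ y₂)) ⊗ₜ antipode (R := k) a) := by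
  simp [mainTri]
variable {k H : Type*} [CommRing k] [Ring H] [HopfAlgebra k H]

lemma sum_uindex {ι β : Type*} [AddCommMonoid β] (s : Finset ι) (F : ι → β) :
    ∑ i : ULift.{w} (Fin s.card), F (s.equivFin.symm i.down) = ∑ i ∈ s, F i := by
  calc ∑ i : ULift.{w} (Fin s.card), F (s.equivFin.symm i.down)
      = ∑ j : Fin s.card, F (s.equivFin.symm j) :=
        Equiv.sum_comp Equiv.ulift (fun j => F (s.equivFin.symm j))
    _ = ∑ a : {x // x ∈ s}, F a := Equiv.sum_comp s.equivFin.symm (fun a => F a)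
    _ = ∑ i ∈ s, F i := Finset.sum_coe_sort s F

/-- Reindex a representation into an arbitrary universe. -/
def uRepr {a : H} {ι : Type*} (r : Coalgebra.Repr k a ι) :
    Coalgebra.Repr k a (ULift.{w} (Fin r.index.card)) where
  index := Finset.univ
  left := fun i => r.left (r.index.equivFin.symm i.down)
  right := fun i => r.right (r.index.equivFin.symm i.down)
  eq := by
    rw [← r.eq]
    exact sum_uindex r.index (fun i => r.left i ⊗ₜ r.right i)

lemma uRepr_sum {a : H} {ι : Type*} (r : Coalgebra.Repr k a ι) {β : Type*} [AddCommMonoid β]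
    (F : H → H → β) :
    ∑ i ∈ (uRepr.{w} r).index, F ((uRepr.{w} r).left i) ((uRepr.{w} r).right i)
      = ∑ i ∈ r.index, F (r.left i) (r.right i) :=
  sum_uindex r.index (fun i => F (r.left i) (r.right i))
section Main
variable {k H : Type*} [CommRing k] [Ring H] [HopfAlgebra k H]

theorem stmt14' (f g : H ⊗[k] H →ₗ[k] H)
    (hmul : ∀ (x y : H) {ι κ : Type w} (rx : Coalgebra.Repr k x ι) (ry : Coalgebra.Repr k y κ),
      x * y = ∑ i ∈ rx.index, ∑ j ∈ ry.index,
        f (rx.left i ⊗ₜ ry.left j) * g (rx.right i ⊗ₜ ry.right j))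
    (hinv : ∀ (x y : H) {ι : Type*} (rx : Coalgebra.Repr k x ι),
      g (x ⊗ₜ y) =
        ∑ i ∈ rx.index, f (antipode (R := k) (f (rx.left i ⊗ₜ y)) ⊗ₜ rx.right i))
    (x y : H) {ι : Type*} (rx : Coalgebra.Repr k x ι) {ι₂ : ι → Type*}
    (rx2 : ∀ i, Coalgebra.Repr k (rx.right i) (ι₂ i)) {ι₃ : ∀ i, ι₂ i → Type*}
    (rx3 : ∀ i j, Coalgebra.Repr k ((rx2 i).right j) (ι₃ i j)) {ιy : Type*}
    (ry : Coalgebra.Repr k y ιy) :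
    (∑ i ∈ rx.index, ∑ j ∈ (rx2 i).index, ∑ l ∈ (rx3 i j).index, ∑ m ∈ ry.index,
        rx.left i * f (antipode (R := k) ((rx3 i j).right l) ⊗ₜ ry.left m) *
          f (antipode (R := k) (f (antipode (R := k) ((rx3 i j).left l) ⊗ₜ ry.right m)) ⊗ₜ
              antipode (R := k) ((rx2 i).left j))) =
      counit (R := k) x • y := by
  classical
  let sw : ∀ i, Coalgebra.Repr k (rx.right i) (H × H) := fun i => ℛ k (rx.right i)
  let sw2 : ∀ i p, Coalgebra.Repr k ((sw i).left p) (H × H) := fun i p => ℛ k ((sw i).left p)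
  have hC : ∀ i (m : ιy) p, ∑ q ∈ (sw2 i p).index,
      f (antipode (R := k) (f (antipode (R := k) ((sw2 i p).right q) ⊗ₜ ry.right m)) ⊗ₜ
          antipode (R := k) ((sw2 i p).left q)) =
      g (antipode (R := k) ((sw i).left p) ⊗ₜ ry.right m) := by
    intro i m p
    refine Eq.trans ?_
      (hinv (antipode (R := k) ((sw i).left p)) (ry.right m)
        (uRepr (swapRepr (sw2 i p)))).symm
    exact (uRepr_sum (swapRepr (sw2 i p))
      (fun l r => f (antipode (R := k) (f (l ⊗ₜ ry.right m)) ⊗ₜ r))).symm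
  have hD : ∀ i, antipode (R := k) (rx.right i) * y =
      ∑ p ∈ (sw i).index, ∑ m ∈ ry.index,
        f (antipode (R := k) ((sw i).right p) ⊗ₜ ry.left m) *
          g (antipode (R := k) ((sw i).left p) ⊗ₜ ry.right m) := by
    intro i
    rw [hmul _ y (uRepr (swapRepr (sw i))) (uRepr ry)]
    refine Eq.trans (uRepr_sum (swapRepr (sw i)) fun lp rp =>
      ∑ m ∈ (uRepr ry).index, f (lp ⊗ₜ (uRepr ry).left m) * g (rp ⊗ₜ (uRepr ry).right m)) ?_
    refine Finset.sum_congr rfl fun p _ => ?_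
    exact uRepr_sum ry fun lm rm =>
      f (antipode (R := k) ((sw i).right p) ⊗ₜ lm) *
        g (antipode (R := k) ((sw i).left p) ⊗ₜ rm)
  calc (∑ i ∈ rx.index, ∑ j ∈ (rx2 i).index, ∑ l ∈ (rx3 i j).index, ∑ m ∈ ry.index,
        rx.left i * f (antipode (R := k) ((rx3 i j).right l) ⊗ₜ ry.left m) *
          f (antipode (R := k) (f (antipode (R := k) ((rx3 i j).left l) ⊗ₜ ry.right m)) ⊗ₜ
              antipode (R := k) ((rx2 i).left j)))
      = ∑ i ∈ rx.index, ∑ m ∈ ry.index, ∑ j ∈ (rx2 i).index, ∑ l ∈ (rx3 i j).index,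
          tri (mainTri f (rx.left i) (ry.left m) (ry.right m))
            ((rx2 i).left j ⊗ₜ ((rx3 i j).left l ⊗ₜ (rx3 i j).right l)) := by
        refine Finset.sum_congr rfl fun i _ => ?_
        calc ∑ j ∈ (rx2 i).index, ∑ l ∈ (rx3 i j).index, ∑ m ∈ ry.index,
              (rx.left i * f (antipode (R := k) ((rx3 i j).right l) ⊗ₜ ry.left m) *
                f (antipode (R := k)
                      (f (antipode (R := k) ((rx3 i j).left l) ⊗ₜ ry.right m)) ⊗ₜ
                    antipode (R := k) ((rx2 i).left j)))
            = ∑ j ∈ (rx2 i).index, ∑ m ∈ ry.index, ∑ l ∈ (rx3 i j).index,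
              (rx.left i * f (antipode (R := k) ((rx3 i j).right l) ⊗ₜ ry.left m) *
                f (antipode (R := k)
                      (f (antipode (R := k) ((rx3 i j).left l) ⊗ₜ ry.right m)) ⊗ₜ
                    antipode (R := k) ((rx2 i).left j))) :=
              Finset.sum_congr rfl fun j _ => Finset.sum_comm
          _ = ∑ m ∈ ry.index, ∑ j ∈ (rx2 i).index, ∑ l ∈ (rx3 i j).index,
              (rx.left i * f (antipode (R := k) ((rx3 i j).right l) ⊗ₜ ry.left m) *
                f (antipode (R := k)
                      (f (antipode (R := k) ((rx3 i j).left l) ⊗ₜ ry.right m)) ⊗ₜ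
                    antipode (R := k) ((rx2 i).left j))) :=
              Finset.sum_comm
          _ = _ := by simp
    _ = ∑ i ∈ rx.index, ∑ m ∈ ry.index, ∑ p ∈ (sw i).index, ∑ q ∈ (sw2 i p).index,
          tri (mainTri f (rx.left i) (ry.left m) (ry.right m))
            ((sw2 i p).left q ⊗ₜ ((sw2 i p).right q ⊗ₜ (sw i).right p)) := by
        refine Finset.sum_congr rfl fun i _ => Finset.sum_congr rfl fun m _ => ?_
        exact coassoc_repr _ (rx.right i) (rx2 i) (rx3 i) (sw i) (sw2 i)
    _ = ∑ i ∈ rx.index, ∑ m ∈ ry.index, ∑ p ∈ (sw i).index,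
          rx.left i * f (antipode (R := k) ((sw i).right p) ⊗ₜ ry.left m) *
            g (antipode (R := k) ((sw i).left p) ⊗ₜ ry.right m) := by
        refine Finset.sum_congr rfl fun i _ => Finset.sum_congr rfl fun m _ =>
          Finset.sum_congr rfl fun p _ => ?_
        rw [← hC i m p, Finset.mul_sum]
        simp
    _ = ∑ i ∈ rx.index, rx.left i * (antipode (R := k) (rx.right i) * y) := by
        refine Finset.sum_congr rfl fun i _ => ?_
        rw [hD i, Finset.mul_sum, Finset.sum_comm]
        refine Finset.sum_congr rfl fun m _ => ?_
        rw [Finset.mul_sum]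
        exact Finset.sum_congr rfl fun p _ => by rw [mul_assoc]
    _ = (∑ i ∈ rx.index, rx.left i * antipode (R := k) (rx.right i)) * y := by
        rw [Finset.sum_mul]
        exact Finset.sum_congr rfl fun i _ => (mul_assoc _ _ _).symm
    _ = counit (R := k) x • y := by
        rw [sum_mul_antipode_eq_smul rx, smul_mul_assoc, one_mul]

end Main

end
end
end
end
end
end MPAuxOuter
/- ===== End auxiliary material ===== -/

/-- Under the involutivity condition `x ↼ y = S(x₁ ⇀ y) ⇀ x₂`, the left
adjoint action of `H_⇀` is trivial:
`x₁ (S(x₄) ⇀ y₁) (S(S(x₃) ⇀ y₂) ⇀ S(x₂)) = ε(x) y`. -/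
theorem stmt14 (f g : H ⊗[k] H →ₗ[k] H) (h : IsMatchedPairOfActions k H f g)
    (hinv : ∀ (x y : H) {ι : Type*} (rx : Coalgebra.Repr k x ι),
      g (x ⊗ₜ y) =
        ∑ i ∈ rx.index, f (antipode (R := k) (f (rx.left i ⊗ₜ y)) ⊗ₜ rx.right i))
    (x y : H) {ι : Type*} (rx : Coalgebra.Repr k x ι) {ι₂ : ι → Type*}
    (rx2 : ∀ i, Coalgebra.Repr k (rx.right i) (ι₂ i)) {ι₃ : ∀ i, ι₂ i → Type*}
    (rx3 : ∀ i j, Coalgebra.Repr k ((rx2 i).right j) (ι₃ i j)) {ιy : Type*}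
    (ry : Coalgebra.Repr k y ιy) :
    (∑ i ∈ rx.index, ∑ j ∈ (rx2 i).index, ∑ l ∈ (rx3 i j).index, ∑ m ∈ ry.index,
        rx.left i * f (antipode (R := k) ((rx3 i j).right l) ⊗ₜ ry.left m) *
          f (antipode (R := k) (f (antipode (R := k) ((rx3 i j).left l) ⊗ₜ ry.right m)) ⊗ₜ
              antipode (R := k) ((rx2 i).left j))) =
      counit (R := k) x • y := by
  exact stmt14' f g h.mp_mul hinv x y rx rx2 rx3 ry

end
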